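/- Let q be an odd prime power and M_2 the incidence matrix of the strongly regular generalized partial geometry (L_1, H_1) from hyperbolic quadrics in PG(3,q). Then rank_2(M_2) ≥ q^4 - q^3 - q^2 + q. -/

import Mathlib

open Matrix

namespace Stmt18Aux

variable {F : Type} [Field F] [Fintype F] [DecidableEq F]

/-- The standard symplectic 2×2 matrix. -/
def Jmat (F : Type) [Field F] : Matrix (Fin 2) (Fin 2) F := !![0, 1; -1, 0]

lemma Jmat_det : (Jmat F).det = 1 := by
  simp [Jmat, Matrix.det_fin_two_of]

lemma Jmat_det_isUnit : IsUnit (Jmat F).det := by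
  rw [Jmat_det]; exact isUnit_one

lemma Jmat_transpose : (Jmat F)ᵀ = -Jmat F := by
  ext i j
  fin_cases i <;> fin_cases j <;> simp [Jmat]

/-- A 2×2 skew-symmetric matrix over a field of characteristic ≠ 2 is a scalar
multiple of `Jmat`. -/
lemma skew_eq (h2 : (2 : F) ≠ 0) (M : Matrix (Fin 2) (Fin 2) F)
    (h : M + Mᵀ = 0) : ∃ t : F, M = t • Jmat F := by
  refine ⟨M 0 1, ?_⟩
  have h00 := congrFun (congrFun h 0) 0
  have h11 := congrFun (congrFun h 1) 1
  have h10 := congrFun (congrFun h 1) 0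
  simp only [Matrix.add_apply, Matrix.transpose_apply, Matrix.zero_apply] at h00 h11 h10
  have e00 : M 0 0 = 0 := by
    have h' : (2 : F) * M 0 0 = 0 := by rw [two_mul]; exact h00
    exact (mul_eq_zero.mp h').resolve_left h2
  have e11 : M 1 1 = 0 := by
    have h' : (2 : F) * M 1 1 = 0 := by rw [two_mul]; exact h11
    exact (mul_eq_zero.mp h').resolve_left h2
  have e10 : M 1 0 = -(M 0 1) := eq_neg_of_add_eq_zero_left h10
  ext i j
  fin_cases i <;> fin_cases j <;>
    simp [Jmat, e00, e11, e10]

end Stmt18Aux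

open Stmt18Aux

/-- The 2-rank of the incidence matrix M₂ of the strongly regular generalized partial
geometry (ℒ₁,ℋ₁) from hyperbolic quadrics in PG(3,q) — rows the lines (N|I₂) skew to
(I₂|0), columns the hyperbolic quadrics [[0,B],[Bᵀ,C]] through (I₂|0), with incidence
BᵀNᵀ+NB+C = 0 — is at least q⁴ - q³ - q² + q. -/
theorem stmt_18 (F : Type) [Field F] [Fintype F] [DecidableEq F] (q : ℕ)
    (hq : Fintype.card F = q) (hodd : Odd q) :
    q ^ 4 - q ^ 3 - q ^ 2 + q ≤
      (Matrix.of (fun (N : Matrix (Fin 2) (Fin 2) F)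
          (H : {BC : Matrix (Fin 2) (Fin 2) F × Matrix (Fin 2) (Fin 2) F //
            IsUnit BC.1.det ∧ BC.2.IsSymm}) =>
        if H.1.1ᵀ * Nᵀ + N * H.1.1 + H.1.2 = 0 then (1 : ZMod 2) else 0)).rank := by
  set A : Matrix (Matrix (Fin 2) (Fin 2) F)
      {BC : Matrix (Fin 2) (Fin 2) F × Matrix (Fin 2) (Fin 2) F //
        IsUnit BC.1.det ∧ BC.2.IsSymm} (ZMod 2) :=
    Matrix.of (fun N H =>
      if H.1.1ᵀ * Nᵀ + N * H.1.1 + H.1.2 = 0 then (1 : ZMod 2) else 0) with hA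
  -- characteristic of F is odd
  have hq1 : q % 2 = 1 := Nat.odd_iff.mp hodd
  have hchar : ringChar F ≠ 2 := by
    intro h
    have h' := FiniteField.even_card_of_char_two h
    rw [hq] at h'
    omega
  have h2 : (2 : F) ≠ 0 := Ring.two_ne_zero hchar
  -- the key injectivity
  have hinj : Function.Injective (Aᵀ.mulVecLin) := by
    rw [← LinearMap.ker_eq_bot, LinearMap.ker_eq_bot']
    intro v hv0
    -- the kernel conditions, one for each column
    have hvcol : ∀ (B C : Matrix (Fin 2) (Fin 2) F) (hB : IsUnit B.det) (hC : C.IsSymm),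
        ∑ N : Matrix (Fin 2) (Fin 2) F,
          (if Bᵀ * Nᵀ + N * B + C = 0 then v N else 0) = 0 := by
      intro B C hB hC
      have h := congrFun hv0 ⟨(B, C), hB, hC⟩
      simp only [Matrix.mulVecLin_apply, Matrix.mulVec, dotProduct,
        Matrix.transpose_apply, Pi.zero_apply, hA, Matrix.of_apply, ite_mul, one_mul,
        zero_mul] at h
      exact h
    -- sums over affine lines with invertible direction vanish
    have hline : ∀ (N₁ d : Matrix (Fin 2) (Fin 2) F), IsUnit d.det →
        ∑ t : F, v (N₁ + t • d) = 0 := by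
      intro N₁ d hd
      obtain ⟨B, hB⟩ : ∃ B : Matrix (Fin 2) (Fin 2) F, B = d⁻¹ * Jmat F := ⟨_, rfl⟩
      have hBdet : IsUnit B.det := by
        rw [hB, Matrix.det_mul, Matrix.det_nonsing_inv, Jmat_det, mul_one]
        exact isUnit_ringInverse.mpr hd
      obtain ⟨C, hC⟩ : ∃ C : Matrix (Fin 2) (Fin 2) F, C = -(Bᵀ * N₁ᵀ + N₁ * B) :=
        ⟨_, rfl⟩
      have hCsymm : C.IsSymm := by
        rw [Matrix.IsSymm, hC]
        simp only [Matrix.transpose_neg, Matrix.transpose_add, Matrix.transpose_mul,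
          Matrix.transpose_transpose]
        rw [add_comm]
      have hC0 : Bᵀ * N₁ᵀ + N₁ * B + C = 0 := by rw [hC]; abel
      have hdB : d * B = Jmat F := by
        rw [hB, ← Matrix.mul_assoc, Matrix.mul_nonsing_inv _ hd, Matrix.one_mul]
      have hJBinv : Jmat F * B⁻¹ = d := by
        rw [hB, Matrix.mul_inv_rev, Matrix.nonsing_inv_nonsing_inv _ hd,
          ← Matrix.mul_assoc, Matrix.mul_nonsing_inv _ Jmat_det_isUnit, Matrix.one_mul]
      have hd0 : d ≠ 0 := by
        intro h0
        rw [h0, Matrix.det_zero] at hd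
        exact not_isUnit_zero hd
      -- the incidence set of the column (B, C) is exactly the line N₁ + F•d
      have hiff : ∀ N : Matrix (Fin 2) (Fin 2) F,
          Bᵀ * Nᵀ + N * B + C = 0 ↔ ∃ t : F, N = N₁ + t • d := by
        intro N
        constructor
        · intro h
          have key : (N - N₁) * B + ((N - N₁) * B)ᵀ
              = (Bᵀ * Nᵀ + N * B + C) - (Bᵀ * N₁ᵀ + N₁ * B + C) := by
            rw [Matrix.transpose_mul, Matrix.transpose_sub, Matrix.sub_mul,
              Matrix.mul_sub]
            abel
          rw [h, hC0, sub_zero] at key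
          obtain ⟨t, ht⟩ := skew_eq h2 _ key
          refine ⟨t, ?_⟩
          have hsub : N - N₁ = t • d := by
            have h3 : (N - N₁) * B * B⁻¹ = (t • Jmat F) * B⁻¹ := by rw [ht]
            rw [Matrix.mul_assoc, Matrix.mul_nonsing_inv _ hBdet, Matrix.mul_one,
              Matrix.smul_mul, hJBinv] at h3
            exact h3
          rw [← hsub]; abel
        · rintro ⟨t, rfl⟩
          have expand : Bᵀ * (N₁ + t • d)ᵀ + (N₁ + t • d) * B + C
              = (Bᵀ * N₁ᵀ + N₁ * B + C) + (t • (Bᵀ * dᵀ) + t • (d * B)) := by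
            rw [Matrix.transpose_add, Matrix.transpose_smul, Matrix.mul_add,
              Matrix.add_mul, Matrix.mul_smul, Matrix.smul_mul]
            abel
          rw [expand, hC0, ← Matrix.transpose_mul d B, hdB, Jmat_transpose]
          simp
      -- turn the column condition into the line sum
      have hsum := hvcol B C hBdet hCsymm
      have hfilter : Finset.univ.filter
            (fun N : Matrix (Fin 2) (Fin 2) F => Bᵀ * Nᵀ + N * B + C = 0)
          = Finset.image (fun t : F => N₁ + t • d) Finset.univ := by
        ext N
        simp only [Finset.mem_filter, Finset.mem_univ, true_and, Finset.mem_image]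
        rw [hiff N]
        constructor
        · rintro ⟨t, ht⟩; exact ⟨t, ht.symm⟩
        · rintro ⟨t, ht⟩; exact ⟨t, ht.symm⟩
      have hinjline : ∀ t ∈ (Finset.univ : Finset F), ∀ t' ∈ (Finset.univ : Finset F),
          N₁ + t • d = N₁ + t' • d → t = t' := by
        intro t _ t' _ hEq
        have h4 : (t - t') • d = 0 := by
          have := add_left_cancel hEq
          rw [sub_smul, this, sub_self]
        rcases smul_eq_zero.mp h4 with h5 | h5
        · exact sub_eq_zero.mp h5
        · exact absurd h5 hd0
      rw [← Finset.sum_filter, hfilter, Finset.sum_image hinjline] at hsum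
      exact hsum
    -- Now show v = 0 using the field plane given by a nonsquare
    funext N₀
    obtain ⟨a, ha⟩ := FiniteField.exists_nonsquare hchar
    have ha0 : a ≠ 0 := fun h0 => ha ⟨0, by rw [h0, mul_zero]⟩
    set W : F → F → Matrix (Fin 2) (Fin 2) F := fun x y => !![x, a * y; y, x] with hW
    -- determinants
    have hdetW : ∀ x y : F, (W x y).det = x * x - a * (y * y) := by
      intro x y
      rw [hW]
      simp [Matrix.det_fin_two_of]
      ring
    have hWunit : ∀ x y : F, ¬(x = 0 ∧ y = 0) → IsUnit (W x y).det := by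
      intro x y hxy
      rw [hdetW]
      rw [isUnit_iff_ne_zero]
      intro h0
      have hx2 : x * x = a * (y * y) := by
        have := sub_eq_zero.mp h0
        exact this
      by_cases hy : y = 0
      · have hx : x = 0 := by
          rw [hy, mul_zero, mul_zero] at hx2
          exact mul_self_eq_zero.mp hx2
        exact hxy ⟨hx, hy⟩
      · apply ha
        refine ⟨x * y⁻¹, ?_⟩
        field_simp
        first
        | linear_combination hx2
        | linear_combination (-1 : F) * hx2
        | linear_combination y * y * hx2
        | linear_combination (-(y * y) : F) * hx2
    -- line sums inside the plane N₀ + W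
    have h1 : ∀ c : F, ∑ y : F, v (N₀ + W c y) = 0 := by
      intro c
      have hu : IsUnit (W 0 1).det := hWunit 0 1 (by simp)
      have h := hline (N₀ + W c 0) (W 0 1) hu
      rw [← h]
      apply Finset.sum_congr rfl
      intro y _
      congr 1
      ext i j
      fin_cases i <;> fin_cases j <;>
        simp [hW, Matrix.add_apply, Matrix.smul_apply] <;> try ring
    have h2' : ∀ s : F, ∑ t : F, v (N₀ + W t (t * s)) = 0 := by
      intro s
      have hu : IsUnit (W 1 s).det := hWunit 1 s (by simp)
      have h := hline N₀ (W 1 s) hu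
      rw [← h]
      apply Finset.sum_congr rfl
      intro t _
      congr 1
      ext i j
      fin_cases i <;> fin_cases j <;>
        simp [hW, Matrix.add_apply, Matrix.smul_apply] <;> try ring
    -- double sum
    have hdouble : ∑ t : F, ∑ s : F, v (N₀ + W t (t * s)) = 0 := by
      rw [Finset.sum_comm]
      exact Finset.sum_eq_zero fun s _ => h2' s
    have hinner : ∀ t : F, t ≠ 0 → ∑ s : F, v (N₀ + W t (t * s)) = 0 := by
      intro t ht
      have hre : ∑ s : F, v (N₀ + W t (t * s)) = ∑ y : F, v (N₀ + W t y) :=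
        Equiv.sum_comp (Equiv.mulLeft₀ t ht) (fun y => v (N₀ + W t y))
      rw [hre]
      exact h1 t
    have hzero : ∑ t : F, ∑ s : F, v (N₀ + W t (t * s))
        = ∑ s : F, v (N₀ + W 0 (0 * s)) := by
      apply Finset.sum_eq_single
      · intro t _ ht; exact hinner t ht
      · intro h; exact absurd (Finset.mem_univ 0) h
    have hW00 : ∀ s : F, N₀ + W 0 (0 * s) = N₀ := by
      intro s
      have : W 0 (0 * s) = 0 := by
        ext i j
        fin_cases i <;> fin_cases j <;> simp [hW]
      rw [this, add_zero]
    have hfinal : ∑ s : F, v (N₀ + W 0 (0 * s)) = v N₀ := by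
      rw [Finset.sum_congr rfl fun s _ => by rw [hW00 s]]
      rw [Finset.sum_const, Finset.card_univ, hq, nsmul_eq_mul]
      have hq2 : (q : ZMod 2) = 1 := by
        rw [← ZMod.natCast_mod q 2, hq1, Nat.cast_one]
      rw [hq2, one_mul]
    have : v N₀ = 0 := by rw [← hfinal, ← hzero, hdouble]
    simpa using this
  -- conclude: the rank of Aᵀ is q⁴
  have hcard : Fintype.card (Matrix (Fin 2) (Fin 2) F) = q ^ 4 := by
    rw [← hq]
    rw [Fintype.card_congr (Matrix.of (m := Fin 2) (n := Fin 2) (α := F)).symm]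
    simp [Matrix, Fintype.card_fun]
    ring
  have hrankT : Aᵀ.rank = q ^ 4 := by
    rw [Matrix.rank, LinearMap.finrank_range_of_inj hinj,
      Module.finrank_fintype_fun_eq_card, hcard]
  have hle : q ^ 4 - q ^ 3 - q ^ 2 + q ≤ q ^ 4 := by
    have h1 : q ≤ q ^ 2 := Nat.le_self_pow (by norm_num) q
    have h2 : q ^ 2 ≤ q ^ 3 := Nat.pow_le_pow_right (Nat.one_le_iff_ne_zero.mpr
      (by rintro rfl; simp at hq1)) (by norm_num)
    have h3 : q ^ 3 ≤ q ^ 4 := Nat.pow_le_pow_right (Nat.one_le_iff_ne_zero.mpr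
      (by rintro rfl; simp at hq1)) (by norm_num)
    omega
  calc q ^ 4 - q ^ 3 - q ^ 2 + q ≤ q ^ 4 := hle
    _ = Aᵀ.rank := hrankT.symm
    _ = A.rank := Matrix.rank_transpose A
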